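/- For every λ ≥ 0, the function φ(λ) = √(2/π) ∫_λ^∞ (x − λ)² exp(−x²/2) dx satisfies φ(λ) ≤ 1 + λ² − λ·√(2/π). -/

import Mathlib

set_option maxHeartbeats 1000000

open MeasureTheory ProbabilityTheory
open scoped Pointwise BigOperators

section Aux
open MeasureTheory Real Set Filter

lemma expform (x : ℝ) : Real.exp (-x^2/2) = Real.exp (-(1/2)*x^2) := by ring_nf

lemma intOn_exp (a : ℝ) : IntegrableOn (fun x => Real.exp (-x^2/2)) (Set.Ioi a) := by
  simp_rw [expform]
  exact (integrable_exp_neg_mul_sq (by norm_num : (0:ℝ) < 1/2)).integrableOn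

lemma intOn_x_exp (a : ℝ) : IntegrableOn (fun x => x * Real.exp (-x^2/2)) (Set.Ioi a) := by
  simp_rw [expform]
  exact (integrable_mul_exp_neg_mul_sq (by norm_num : (0:ℝ) < 1/2)).integrableOn

lemma intOn_x2_exp {l : ℝ} (hl : 0 ≤ l) :
    IntegrableOn (fun x => x^2 * Real.exp (-x^2/2)) (Set.Ioi l) := by
  refine IntegrableOn.mono_set ?_ (Set.Ioi_subset_Ioi hl)
  have h := integrableOn_rpow_mul_exp_neg_mul_sq (by norm_num : (0:ℝ) < 1/2) (s := 2) (by norm_num)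
  refine h.congr_fun (fun x hx => ?_) measurableSet_Ioi
  beta_reduce
  rw [← expform, ← Real.rpow_natCast x 2]
  norm_num

lemma hasDerivE (x : ℝ) : HasDerivAt (fun y : ℝ => -y^2/2) (-x) x := by
  simpa [neg_div] using (((hasDerivAt_pow 2 x).div_const 2).fun_neg)

lemma hasDeriv1 (x : ℝ) : HasDerivAt (fun y : ℝ => -Real.exp (-y^2/2)) (x * Real.exp (-x^2/2)) x := by
  have := ((hasDerivE x).exp).fun_neg
  exact this.congr_deriv (by ring)

lemma hasDeriv2 (x : ℝ) : HasDerivAt (fun y : ℝ => -(y * Real.exp (-y^2/2)))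
    ((x^2 - 1) * Real.exp (-x^2/2)) x := by
  have := ((hasDerivAt_id x).fun_mul (hasDerivE x).exp).fun_neg
  exact this.congr_deriv (by simp only [id_eq, one_mul]; ring)

lemma tendsto_exp_sq : Tendsto (fun x : ℝ => -Real.exp (-x^2/2)) atTop (nhds 0) := by
  rw [show (0:ℝ) = -0 by norm_num]
  apply Tendsto.neg
  apply Real.tendsto_exp_atBot.comp
  have h : Tendsto (fun x : ℝ => x^2) atTop atTop := tendsto_pow_atTop two_ne_zero
  exact (h.const_mul_atTop_of_neg (by norm_num : (-(1:ℝ)/2) < 0)).congr fun x => by ring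

lemma tendsto_x_exp_sq : Tendsto (fun x : ℝ => -(x * Real.exp (-x^2/2))) atTop (nhds 0) := by
  rw [show (0:ℝ) = -0 by norm_num]
  apply Tendsto.neg
  have h := (rpow_mul_exp_neg_mul_sq_isLittleO_exp_neg (by norm_num : (0:ℝ) < 1/2) 1).tendsto_zero_of_tendsto
    ((Real.tendsto_exp_atBot.comp (tendsto_id.const_mul_atTop_of_neg
      (by norm_num : (-(1:ℝ)/2) < 0))).congr fun x => by simp [mul_comm]; ring_nf)
  refine h.congr' ?_
  filter_upwards [eventually_ge_atTop (0:ℝ)] with x hx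
  rw [Real.rpow_one, expform]

lemma int1 (l : ℝ) : ∫ x in Set.Ioi l, x * Real.exp (-x^2/2) = Real.exp (-l^2/2) := by
  have h := integral_Ioi_of_hasDerivAt_of_tendsto' (f := fun y : ℝ => -Real.exp (-y^2/2))
    (fun x _ => hasDeriv1 x) (intOn_x_exp l) tendsto_exp_sq
  rw [h]; ring

lemma int2 {l : ℝ} (hl : 0 ≤ l) :
    ∫ x in Set.Ioi l, (x^2 - 1) * Real.exp (-x^2/2) = l * Real.exp (-l^2/2) := by
  have hint : IntegrableOn (fun x => (x^2 - 1) * Real.exp (-x^2/2)) (Set.Ioi l) := by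
    have h2 := (intOn_x2_exp hl).sub (intOn_exp l)
    refine (IntegrableOn.congr_fun h2 (fun x _ => by simp; ring) measurableSet_Ioi)
  have h := integral_Ioi_of_hasDerivAt_of_tendsto' (f := fun y : ℝ => -(y * Real.exp (-y^2/2)))
    (fun x _ => hasDeriv2 x) hint tendsto_x_exp_sq
  rw [h]; ring

lemma int2' {l : ℝ} (hl : 0 ≤ l) :
    ∫ x in Set.Ioi l, x^2 * Real.exp (-x^2/2)
      = l * Real.exp (-l^2/2) + ∫ x in Set.Ioi l, Real.exp (-x^2/2) := by
  have h := int2 hl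
  have hsub : ∫ x in Set.Ioi l, (x^2 - 1) * Real.exp (-x^2/2)
      = (∫ x in Set.Ioi l, x^2 * Real.exp (-x^2/2)) - ∫ x in Set.Ioi l, Real.exp (-x^2/2) := by
    rw [← integral_sub (intOn_x2_exp hl) (intOn_exp l)]
    congr 1; funext x; ring
  rw [hsub] at h
  linarith

lemma intS : ∫ x in Set.Ioi (0:ℝ), Real.exp (-x^2/2) = Real.sqrt (2*Real.pi) / 2 := by
  simp_rw [expform]
  rw [integral_gaussian_Ioi]
  congr 2
  rw [div_div_eq_mul_div, div_one]
  ring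

end Aux

noncomputable section

/-- `phi t = sqrt(2/pi) * int_t^infty (x-t)^2 exp(-x^2/2) dx`. -/
def phi (t : ℝ) : ℝ :=
  Real.sqrt (2 / Real.pi) * ∫ x in Set.Ioi t, (x - t) ^ 2 * Real.exp (-x ^ 2 / 2)

theorem phi_upper_bound (l : ℝ) (hl : 0 ≤ l) :
    phi l ≤ 1 + l ^ 2 - l * Real.sqrt (2 / Real.pi) := by
  set c := Real.sqrt (2 / Real.pi) with hc_def
  set K := Real.exp (-l^2/2) with hK_def
  set G := ∫ x in Set.Ioi l, Real.exp (-x^2/2) with hG_def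
  set S := ∫ x in Set.Ioi (0:ℝ), Real.exp (-x^2/2) with hS_def
  have hc : 0 ≤ c := Real.sqrt_nonneg _
  have hK0 : 0 ≤ K := (Real.exp_pos _).le
  have hK1 : K ≤ 1 := Real.exp_le_one_iff.mpr (by nlinarith [sq_nonneg l])
  have hKlow : 1 - l^2/2 ≤ K := by
    have := Real.add_one_le_exp (-l^2/2)
    linarith
  -- expansion of phi
  have hexpand : phi l = c * ((1 + l^2) * G - l * K) := by
    rw [phi]
    congr 1
    have h1 : ∀ x : ℝ, (x - l)^2 * Real.exp (-x^2/2)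
        = x^2 * Real.exp (-x^2/2) - (2*l) * (x * Real.exp (-x^2/2)) + l^2 * Real.exp (-x^2/2) := by
      intro x; ring
    calc ∫ x in Set.Ioi l, (x - l)^2 * Real.exp (-x^2/2)
        = ∫ x in Set.Ioi l, (x^2 * Real.exp (-x^2/2) - (2*l) * (x * Real.exp (-x^2/2))
            + l^2 * Real.exp (-x^2/2)) := by
          refine setIntegral_congr_fun measurableSet_Ioi fun x _ => ?_
          ring
      _ = (∫ x in Set.Ioi l, (x^2 * Real.exp (-x^2/2) - (2*l) * (x * Real.exp (-x^2/2))))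
            + ∫ x in Set.Ioi l, l^2 * Real.exp (-x^2/2) := by
          refine integral_add ?_ ((intOn_exp l).const_mul _)
          exact (intOn_x2_exp hl).sub ((intOn_x_exp l).const_mul _)
      _ = (∫ x in Set.Ioi l, x^2 * Real.exp (-x^2/2))
            - (∫ x in Set.Ioi l, (2*l) * (x * Real.exp (-x^2/2)))
            + ∫ x in Set.Ioi l, l^2 * Real.exp (-x^2/2) := by
          rw [integral_sub (intOn_x2_exp hl) ((intOn_x_exp l).const_mul _)]
      _ = (l * K + G) - (2*l) * K + l^2 * G := by
          rw [int2' hl, MeasureTheory.integral_const_mul, MeasureTheory.integral_const_mul, int1]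
      _ = (1 + l^2) * G - l * K := by ring
  have hcS : c * S = 1 := by
    have h4 : Real.sqrt (2 / Real.pi) * Real.sqrt (2 * Real.pi) = 2 := by
      rw [← Real.sqrt_mul (by positivity) (2 * Real.pi),
        show 2 / Real.pi * (2 * Real.pi) = 4 by field_simp; ring,
        show (4:ℝ) = 2^2 by norm_num, Real.sqrt_sq (by norm_num)]
    rw [hS_def, intS, hc_def]
    linarith
  have hEnonneg : 0 ≤ᵐ[volume.restrict (Set.Ioi (0:ℝ))] fun x => Real.exp (-x^2/2) :=
    Filter.Eventually.of_forall fun x => (Real.exp_pos _).le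
  have hGS : G ≤ S :=
    setIntegral_mono_set (intOn_exp 0) hEnonneg
      (Filter.Eventually.of_forall (Set.Ioi_subset_Ioi hl))
  have hG0 : 0 ≤ G := setIntegral_nonneg measurableSet_Ioi fun x _ => (Real.exp_pos _).le
  -- split S = ∫ Ioc 0 l + G
  have hsplit : S = (∫ x in Set.Ioc 0 l, Real.exp (-x^2/2)) + G := by
    rw [hS_def, hG_def, ← setIntegral_union (Set.Ioc_disjoint_Ioi le_rfl) measurableSet_Ioi
      ((intOn_exp 0).mono_set Set.Ioc_subset_Ioi_self) (intOn_exp l), Set.Ioc_union_Ioi_eq_Ioi hl]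
  rw [hexpand]
  clear hexpand hEnonneg
  rcases le_or_gt l 1 with hl1 | hl1
  · -- small case: ∫ Ioc 0 l ≥ l * K
    have hIoc : l * K ≤ ∫ x in Set.Ioc 0 l, Real.exp (-x^2/2) := by
      have h1 : ∫ x in Set.Ioc 0 l, K ≤ ∫ x in Set.Ioc 0 l, Real.exp (-x^2/2) := by
        refine setIntegral_mono_on (integrableOn_const measure_Ioc_lt_top.ne)
          ((intOn_exp 0).mono_set Set.Ioc_subset_Ioi_self) measurableSet_Ioc fun x hx => ?_
        exact Real.exp_le_exp.mpr (by nlinarith [hx.1.le, hx.2])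
      calc l * K = ∫ _ in Set.Ioc 0 l, K := by
            rw [setIntegral_const, Real.volume_real_Ioc, smul_eq_mul,
              max_eq_left (by linarith)]
            ring
        _ ≤ _ := h1
    have key : c * (l * K) ≤ 1 - c * G := by
      have := mul_le_mul_of_nonneg_left hIoc hc
      nlinarith [hsplit, hcS]
    have hcl : 0 ≤ c * l := mul_nonneg hc hl
    have s1 : c*l*(1-K) ≤ c*l*(l^2/2) := mul_le_mul_of_nonneg_left (by linarith) hcl
    have s2 : c*l*(l^2/2) ≤ c*l*((1+l^2)*(1-l^2/2)) := by
      refine mul_le_mul_of_nonneg_left ?_ hcl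
      have hsq : l^2 ≤ 1 := by nlinarith
      nlinarith [hsq, sq_nonneg l]
    have s3 : c*l*((1+l^2)*(1-l^2/2)) ≤ c*l*((1+l^2)*K) := by
      refine mul_le_mul_of_nonneg_left (mul_le_mul_of_nonneg_left hKlow (by positivity)) hcl
    have s4 : c*l*((1+l^2)*K) = (1+l^2)*(c*(l*K)) := by ring
    have s5 : (1+l^2)*(c*(l*K)) ≤ (1+l^2)*(1 - c*G) := by
      refine mul_le_mul_of_nonneg_left key (by positivity)
    clear hIoc hsplit hGS hcS key
    clear_value c K G S
    nlinarith [s1, s2, s3, s4, s5]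
  · -- large case: ∫ Ioc 0 l ≥ 1/2
    have hIoc : (1/2 : ℝ) ≤ ∫ x in Set.Ioc 0 l, Real.exp (-x^2/2) := by
      have hsub : ∫ x in Set.Ioc 0 1, Real.exp (-x^2/2)
          ≤ ∫ x in Set.Ioc 0 l, Real.exp (-x^2/2) := by
        refine setIntegral_mono_set ((intOn_exp 0).mono_set Set.Ioc_subset_Ioi_self)
          (Filter.Eventually.of_forall fun x => (Real.exp_pos _).le)
          (Filter.Eventually.of_forall (Set.Ioc_subset_Ioc_right hl1.le))
      have h1 : ∫ _ in Set.Ioc (0:ℝ) 1, (1/2 : ℝ) ≤ ∫ x in Set.Ioc (0:ℝ) 1, Real.exp (-x^2/2) := by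
        refine setIntegral_mono_on (integrableOn_const measure_Ioc_lt_top.ne)
          ((intOn_exp 0).mono_set Set.Ioc_subset_Ioi_self) measurableSet_Ioc fun x hx => ?_
        have := Real.add_one_le_exp (-x^2/2)
        nlinarith [hx.1.le, hx.2]
      have h2 : ∫ _ in Set.Ioc (0:ℝ) 1, (1/2 : ℝ) = 1/2 := by
        rw [setIntegral_const, Real.volume_real_Ioc, smul_eq_mul,
          max_eq_left (by norm_num)]
        norm_num
      linarith
    have key : c * (1/2) ≤ 1 - c * G := by
      have := mul_le_mul_of_nonneg_left hIoc hc
      nlinarith [hsplit, hcS]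
    have hcl : 0 ≤ c * l := mul_nonneg hc hl
    have s1 : c*l*(1-K) ≤ c*l*1 := mul_le_mul_of_nonneg_left (by linarith) hcl
    have s2 : c*l ≤ c*((1+l^2)/2) := by
      refine mul_le_mul_of_nonneg_left ?_ hc
      nlinarith [sq_nonneg (l-1)]
    have s5 : (1+l^2)*(c*(1/2)) ≤ (1+l^2)*(1 - c*G) := by
      refine mul_le_mul_of_nonneg_left key (by positivity)
    clear hIoc hsplit hGS hcS key
    clear_value c K G S
    nlinarith [s1, s2, s5]

end
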